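/- Let K and M be positive integers with K ≤ M, and let γ ∈ (0, 1]. For each j ∈ {1,…,K} let p_j be a probability mass function on {1,…,M} with p_j(m) ≥ γ/M for every m, and let a_1,…,a_K be independent random variables with a_j distributed according to p_j (i.e., consider the product of the PMFs p_1,…,p_K). Then for each fixed k ∈ {1,…,K}, the probability that user k's channel differs from every other user's channel satisfies P(a_j ≠ a_k for all j ≠ k) ≥ γ/M^K. -/

import Mathlib

open MeasureTheory

/-- Per-round collision-resolution bound from Theorem 3 of the paper's
adversarial setting: if `K ≤ M` users pick channels independently according to
PMFs whose every entry is at least `γ/M`, then any fixed user `k` is alone on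
its channel with probability at least `γ/M^K`. -/
theorem collision_resolution_probability_bound
    (K M : ℕ) (hK : 0 < K) (hKM : K ≤ M)
    (γ : ℝ) (hγ0 : 0 < γ) (hγ1 : γ ≤ 1)
    (p : Fin K → PMF (Fin M))
    (hp : ∀ j : Fin K, ∀ m : Fin M, ENNReal.ofReal (γ / (M : ℝ)) ≤ p j m)
    (k : Fin K) :
    ENNReal.ofReal (γ / (M : ℝ)^K) ≤
      MeasureTheory.Measure.pi (fun j : Fin K => (p j).toMeasure)
        {a : Fin K → Fin M | ∀ j : Fin K, j ≠ k → a j ≠ a k} := by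
  have hMpos : 0 < M := lt_of_lt_of_le hK hKM
  have hMne : (M : ENNReal) ≠ 0 := by exact_mod_cast hMpos.ne'
  have hMfin : (M : ENNReal) ≠ ⊤ := ENNReal.natCast_ne_top M
  -- for each j there is a channel with probability at least 1/M
  have hmax : ∀ j : Fin K, ∃ m : Fin M, (M : ENNReal)⁻¹ ≤ p j m := by
    intro j
    obtain ⟨m, -, hm⟩ := Finset.exists_max_image Finset.univ (p j)
      ⟨⟨0, hMpos⟩, Finset.mem_univ _⟩
    refine ⟨m, ?_⟩
    have hsum : ∑ m' : Fin M, p j m' = 1 := by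
      rw [← tsum_fintype (L := .unconditional _)]; exact (p j).tsum_coe
    have h1 : (1 : ENNReal) ≤ (M : ENNReal) * p j m := by
      calc (1 : ENNReal) = ∑ m' : Fin M, p j m' := hsum.symm
        _ ≤ ∑ _m' : Fin M, p j m :=
          Finset.sum_le_sum fun m' _ => hm m' (Finset.mem_univ _)
        _ = (M : ENNReal) * p j m := by
          simp [Finset.sum_const, nsmul_eq_mul]
    calc (M : ENNReal)⁻¹ = (M : ENNReal)⁻¹ * 1 := (mul_one _).symm
      _ ≤ (M : ENNReal)⁻¹ * ((M : ENNReal) * p j m) := mul_le_mul_right h1 _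
      _ = p j m := by rw [← mul_assoc, ENNReal.inv_mul_cancel hMne hMfin, one_mul]
  choose g hg using hmax
  -- choose a channel for user k avoiding all g j, j ≠ k
  set s : Finset (Fin M) := (Finset.univ.erase k).image g with hs
  have hcard : s.card < M := by
    calc s.card ≤ (Finset.univ.erase k).card := Finset.card_image_le
      _ = K - 1 := by rw [Finset.card_erase_of_mem (Finset.mem_univ _), Finset.card_univ,
          Fintype.card_fin]
      _ < K := Nat.sub_lt hK one_pos
      _ ≤ M := hKM
  have hc : ∃ c : Fin M, c ∉ s := by
    by_contra h
    push_neg at h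
    have : (Finset.univ : Finset (Fin M)).card ≤ s.card :=
      Finset.card_le_card fun x _ => h x
    simp only [Finset.card_univ, Fintype.card_fin] at this
    omega
  obtain ⟨c, hc⟩ := hc
  -- the chosen profile
  set f : Fin K → Fin M := fun j => if j = k then c else g j with hf
  -- singleton box is inside the event
  have hsub : Set.pi Set.univ (fun j : Fin K => ({f j} : Set (Fin M))) ⊆
      {a : Fin K → Fin M | ∀ j : Fin K, j ≠ k → a j ≠ a k} := by
    intro x hx j hj
    have hxj : x j = f j := hx j (Set.mem_univ _)
    have hxk : x k = f k := hx k (Set.mem_univ _)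
    have hfk : f k = c := by simp [hf]
    have hfj : f j = g j := by simp [hf, hj]
    rw [hxj, hxk, hfk, hfj]
    intro heq
    exact hc (heq ▸ Finset.mem_image_of_mem g (Finset.mem_erase.mpr ⟨hj, Finset.mem_univ _⟩))
  -- measure of the box
  have hbox : MeasureTheory.Measure.pi (fun j : Fin K => (p j).toMeasure)
      (Set.pi Set.univ (fun j : Fin K => ({f j} : Set (Fin M)))) =
      ∏ j : Fin K, p j (f j) := by
    rw [MeasureTheory.Measure.pi_pi]
    refine Finset.prod_congr rfl fun j _ => ?_
    exact (p j).toMeasure_apply_singleton _ (measurableSet_singleton _)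
  -- the split product
  have hsplit : ∏ j : Fin K, (if j = k then ENNReal.ofReal (γ / (M : ℝ))
      else (M : ENNReal)⁻¹)
      = ENNReal.ofReal (γ / (M : ℝ)) * ((M : ENNReal)⁻¹) ^ (K - 1) := by
    rw [← Finset.mul_prod_erase Finset.univ _ (Finset.mem_univ k)]
    simp only [if_pos rfl]
    congr 1
    rw [Finset.prod_congr rfl (fun j hj => if_neg (Finset.mem_erase.mp hj).1),
      Finset.prod_const, Finset.card_erase_of_mem (Finset.mem_univ _), Finset.card_univ,
      Fintype.card_fin]
  -- arithmetic identity
  have hMR : (0 : ℝ) < (M : ℝ) := by exact_mod_cast hMpos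
  have key : ENNReal.ofReal (γ / (M : ℝ)^K)
      = ENNReal.ofReal (γ / (M : ℝ)) * ((M : ENNReal)⁻¹) ^ (K - 1) := by
    have hK1 : K - 1 + 1 = K := Nat.succ_pred_eq_of_pos hK
    rw [ENNReal.ofReal_div_of_pos (by positivity), ENNReal.ofReal_div_of_pos hMR,
      ENNReal.ofReal_pow hMR.le, ENNReal.ofReal_natCast,
      div_eq_mul_inv, div_eq_mul_inv, ENNReal.inv_pow, mul_assoc, ← pow_succ', hK1]
  -- lower bound the product
  have hprod : ENNReal.ofReal (γ / (M : ℝ)^K) ≤ ∏ j : Fin K, p j (f j) := by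
    rw [key, ← hsplit]
    refine Finset.prod_le_prod' fun j _ => ?_
    by_cases hjk : j = k
    · subst hjk
      simp only [if_pos rfl, hf]
      exact hp j c
    · simp only [if_neg hjk, hf]
      exact hg j
  calc ENNReal.ofReal (γ / (M : ℝ)^K) ≤ ∏ j : Fin K, p j (f j) := hprod
    _ = MeasureTheory.Measure.pi (fun j : Fin K => (p j).toMeasure)
        (Set.pi Set.univ (fun j : Fin K => ({f j} : Set (Fin M)))) := hbox.symm
    _ ≤ _ := measure_mono hsub
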